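/- For every integer p ≥ 1 there exists a finite constant C_p such that ∫_{ℝ^p} |sinc(x₁ + ⋯ + x_p)| · ∏_{j=1}^{p} |sinc(x_j)| dx₁ ⋯ dx_p ≤ C_p. -/

import Mathlib

open MeasureTheory Real
open scoped BigOperators ENNReal

noncomputable section

/-- The (unnormalized) sinc function: `sin u / u`, extended by `1` at `0`. -/
def sinc (u : ℝ) : ℝ := if u = 0 then 1 else Real.sin u / u

lemma measurable_sinc : Measurable _root_.sinc := by
  unfold _root_.sinc
  exact Measurable.ite (measurableSet_singleton 0) measurable_const
    (Real.measurable_sin.div measurable_id)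

lemma abs_sinc_le_one (u : ℝ) : |_root_.sinc u| ≤ 1 := by
  unfold _root_.sinc
  split
  · simp
  · rename_i h
    rw [abs_div, div_le_one (abs_pos.mpr h)]
    exact Real.abs_sin_le_abs

lemma abs_sinc_le (u : ℝ) : |_root_.sinc u| ≤ 2 * (1 + |u|) ^ (-(1:ℝ)) := by
  have h0 : (0:ℝ) < 1 + |u| := by positivity
  rw [Real.rpow_neg_one]
  rcases le_total (|u|) 1 with h | h
  · calc |_root_.sinc u| ≤ 1 := _root_.abs_sinc_le_one u
      _ ≤ 2 * (1 + |u|)⁻¹ := by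
          rw [le_mul_inv_iff₀ h0]; linarith
  · have hu : u ≠ 0 := by intro h'; simp [h'] at h; linarith
    have h1 : |_root_.sinc u| ≤ |u|⁻¹ := by
      unfold _root_.sinc
      rw [if_neg hu, abs_div, div_le_iff₀ (abs_pos.mpr hu),
        inv_mul_cancel₀ (by positivity : |u| ≠ 0)]
      exact Real.abs_sin_le_one u
    calc |_root_.sinc u| ≤ |u|⁻¹ := h1
      _ ≤ 2 * (1 + |u|)⁻¹ := by
          rw [le_mul_inv_iff₀ h0, inv_mul_eq_div, div_le_iff₀ (by linarith : (0:ℝ) < |u|)]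
          linarith

lemma aux_pointwise {b u v t : ℝ} (hb0 : 0 < b) (hb1 : b ≤ 1)
    (hu : 1 ≤ u) (hv : 1 ≤ v) (ht : 1 ≤ t) (htuv : t ≤ u * v) :
    u ^ (-(1:ℝ)) * v ^ (-b) ≤
      t ^ (-(b/4)) * (u ^ (-(1+b/2)) + v ^ (-(1+b/2))) := by
  have hu0 : (0:ℝ) < u := lt_of_lt_of_le one_pos hu
  have hv0 : (0:ℝ) < v := lt_of_lt_of_le one_pos hv
  have ht0 : (0:ℝ) < t := lt_of_lt_of_le one_pos ht
  have key : ∀ w : ℝ, 1 ≤ w → t ≤ w * w → w ^ (-(b/2)) ≤ t ^ (-(b/4)) := by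
    intro w hw hts
    have hw0 : (0:ℝ) < w := lt_of_lt_of_le one_pos hw
    have h1 : t ^ (b/4) ≤ w ^ (b/2) := by
      calc t ^ (b/4) ≤ (w * w) ^ (b/4) := Real.rpow_le_rpow ht0.le hts (by linarith)
        _ = w ^ (b/4) * w ^ (b/4) := Real.mul_rpow hw0.le hw0.le
        _ = w ^ (b/2) := by rw [← Real.rpow_add hw0]; ring_nf
    rw [Real.rpow_neg hw0.le, Real.rpow_neg ht0.le]
    exact inv_anti₀ (Real.rpow_pos_of_pos ht0 _) h1
  rcases le_total u v with h | h
  · have h2 : u ^ (b/2) * v ^ (-b) ≤ t ^ (-(b/4)) := by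
      calc u ^ (b/2) * v ^ (-b)
          ≤ v ^ (b/2) * v ^ (-b) :=
            mul_le_mul_of_nonneg_right (Real.rpow_le_rpow hu0.le h (by linarith))
              (Real.rpow_pos_of_pos hv0 _).le
        _ = v ^ (-(b/2)) := by rw [← Real.rpow_add hv0]; ring_nf
        _ ≤ t ^ (-(b/4)) := key v hv (le_trans htuv (by nlinarith))
    have h3 : u ^ (-(1:ℝ)) * v ^ (-b) = (u ^ (b/2) * v ^ (-b)) * u ^ (-(1+b/2)) := by
      rw [mul_comm (u ^ (b/2)), mul_assoc, ← Real.rpow_add hu0]; ring_nf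
    calc u ^ (-(1:ℝ)) * v ^ (-b) = (u ^ (b/2) * v ^ (-b)) * u ^ (-(1+b/2)) := h3
      _ ≤ t ^ (-(b/4)) * u ^ (-(1+b/2)) :=
          mul_le_mul_of_nonneg_right h2 (Real.rpow_pos_of_pos hu0 _).le
      _ ≤ t ^ (-(b/4)) * (u ^ (-(1+b/2)) + v ^ (-(1+b/2))) := by
          have := (Real.rpow_pos_of_pos hv0 (-(1+b/2))).le
          have := (Real.rpow_pos_of_pos ht0 (-(b/4))).le
          nlinarith
  · have h2 : u ^ (-(1:ℝ)) * v ^ (1 - b/2) ≤ t ^ (-(b/4)) := by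
      calc u ^ (-(1:ℝ)) * v ^ (1 - b/2)
          ≤ u ^ (-(1:ℝ)) * u ^ (1 - b/2) :=
            mul_le_mul_of_nonneg_left (Real.rpow_le_rpow hv0.le h (by linarith))
              (Real.rpow_pos_of_pos hu0 _).le
        _ = u ^ (-(b/2)) := by rw [← Real.rpow_add hu0]; ring_nf
        _ ≤ t ^ (-(b/4)) := key u hu (le_trans htuv (by nlinarith))
    have h3 : u ^ (-(1:ℝ)) * v ^ (-b) = (u ^ (-(1:ℝ)) * v ^ (1 - b/2)) * v ^ (-(1+b/2)) := by
      rw [mul_assoc, ← Real.rpow_add hv0]; ring_nf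
    calc u ^ (-(1:ℝ)) * v ^ (-b) = (u ^ (-(1:ℝ)) * v ^ (1 - b/2)) * v ^ (-(1+b/2)) := h3
      _ ≤ t ^ (-(b/4)) * v ^ (-(1+b/2)) :=
          mul_le_mul_of_nonneg_right h2 (Real.rpow_pos_of_pos hv0 _).le
      _ ≤ t ^ (-(b/4)) * (u ^ (-(1+b/2)) + v ^ (-(1+b/2))) := by
          have := (Real.rpow_pos_of_pos hu0 (-(1+b/2))).le
          have := (Real.rpow_pos_of_pos ht0 (-(b/4))).le
          nlinarith

lemma kernel_int {b : ℝ} (hb0 : 0 < b) (hb1 : b ≤ 1) :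
    ∃ C : ℝ, 0 ≤ C ∧ ∀ s : ℝ,
      ∫⁻ x : ℝ, ENNReal.ofReal ((1 + |x|) ^ (-(1:ℝ)) * (1 + |s + x|) ^ (-b)) ≤
        ENNReal.ofReal C * ENNReal.ofReal ((1 + |s|) ^ (-(b/4))) := by
  set e : ℝ := 1 + b/2 with he
  have hmeas : Measurable fun x : ℝ => ENNReal.ofReal ((1 + |x|) ^ (-e)) := by fun_prop
  set I : ℝ≥0∞ := ∫⁻ x : ℝ, ENNReal.ofReal ((1 + |x|) ^ (-e)) with hI
  have hIfin : I < ∞ := by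
    have : ((Module.finrank ℝ ℝ : ℝ)) < e := by
      rw [Module.finrank_self]; simp [he]; linarith
    simpa [hI, Real.norm_eq_abs] using
      finite_integral_one_add_norm (μ := (volume : Measure ℝ)) this
  refine ⟨2 * I.toReal, by positivity, fun s => ?_⟩
  have h1 : ∀ x : ℝ, (1 + |x|) ^ (-(1:ℝ)) * (1 + |s + x|) ^ (-b) ≤
      (1 + |s|) ^ (-(b/4)) * ((1 + |x|) ^ (-e) + (1 + |s + x|) ^ (-e)) := by
    intro x
    refine aux_pointwise hb0 hb1 (by simp [abs_nonneg] : (1:ℝ) ≤ 1 + |x|)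
      (by simp [abs_nonneg]) (by simp [abs_nonneg]) ?_
    have habs : |s| ≤ |x| + |s + x| := by
      have hs : s = (s + x) + -x := by ring
      calc |s| = |(s + x) + -x| := by rw [← hs]
        _ ≤ |s + x| + |-x| := abs_add_le _ _
        _ = |x| + |s + x| := by rw [abs_neg]; ring
    nlinarith [abs_nonneg x, abs_nonneg (s + x)]
  calc ∫⁻ x : ℝ, ENNReal.ofReal ((1 + |x|) ^ (-(1:ℝ)) * (1 + |s + x|) ^ (-b))
      ≤ ∫⁻ x : ℝ, ENNReal.ofReal ((1 + |s|) ^ (-(b/4)) *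
          ((1 + |x|) ^ (-e) + (1 + |s + x|) ^ (-e))) :=
        lintegral_mono fun x => ENNReal.ofReal_le_ofReal (h1 x)
    _ = ENNReal.ofReal ((1 + |s|) ^ (-(b/4))) *
          ∫⁻ x : ℝ, (ENNReal.ofReal ((1 + |x|) ^ (-e)) +
            ENNReal.ofReal ((1 + |s + x|) ^ (-e))) := by
        rw [← lintegral_const_mul' _ _ ENNReal.ofReal_ne_top]
        congr 1 with x
        rw [← ENNReal.ofReal_add (by positivity) (by positivity),
          ← ENNReal.ofReal_mul (by positivity)]
    _ = ENNReal.ofReal ((1 + |s|) ^ (-(b/4))) * (I + I) := by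
        congr 1
        rw [lintegral_add_left hmeas]
        congr 1
        exact lintegral_add_left_eq_self (fun x : ℝ => ENNReal.ofReal ((1 + |x|) ^ (-e))) s
    _ ≤ ENNReal.ofReal (2 * I.toReal) * ENNReal.ofReal ((1 + |s|) ^ (-(b/4))) := by
        rw [mul_comm]
        gcongr
        rw [ENNReal.ofReal_mul (by norm_num), ENNReal.ofReal_ofNat,
          ENNReal.ofReal_toReal hIfin.ne, two_mul]

lemma main_bound (k : ℕ) : ∃ Dk : ℝ, 0 ≤ Dk ∧ ∀ s : ℝ,
    ∫⁻ x : Fin k → ℝ, ENNReal.ofReal ((∏ j, |_root_.sinc (x j)|) * |_root_.sinc (s + ∑ j, x j)|)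
      ≤ ENNReal.ofReal Dk * ENNReal.ofReal ((1 + |s|) ^ (-(((4:ℝ)^k)⁻¹))) := by
  induction k with
  | zero =>
    refine ⟨2, by norm_num, fun s => ?_⟩
    rw [lintegral_unique]
    have hvol : (volume : Measure (Fin 0 → ℝ)) Set.univ = 1 := by
      simp [MeasureTheory.volume_pi, MeasureTheory.Measure.pi_univ]
    rw [hvol, mul_one]
    simp only [Finset.univ_eq_empty, Finset.prod_empty, Finset.sum_empty, add_zero, one_mul,
      pow_zero, inv_one]
    rw [← ENNReal.ofReal_mul (by norm_num)]
    exact ENNReal.ofReal_le_ofReal (abs_sinc_le s)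
  | succ k ih =>
    obtain ⟨Dk, hDk, hbd⟩ := ih
    set b : ℝ := ((4:ℝ)^k)⁻¹ with hb
    have hb0 : 0 < b := by positivity
    have hb1 : b ≤ 1 := by
      rw [hb]
      have : (1:ℝ) ≤ 4^k := one_le_pow₀ (by norm_num)
      rw [inv_le_one_iff₀]; right; exact this
    obtain ⟨C, hC, hker⟩ := kernel_int hb0 hb1
    refine ⟨2 * Dk * C, by positivity, fun s => ?_⟩
    have hexp : -(((4:ℝ)^(k+1))⁻¹) = -(b/4) := by
      rw [hb, pow_succ]
      field_simp
    rw [hexp]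
    have hmeasF : Measurable fun x : Fin (k+1) → ℝ =>
        ENNReal.ofReal ((∏ j, |_root_.sinc (x j)|) * |_root_.sinc (s + ∑ j, x j)|) := by
      apply Measurable.ennreal_ofReal
      apply Measurable.mul
      · exact Finset.measurable_prod _ fun j _ =>
          (_root_.measurable_sinc.comp (measurable_pi_apply j)).abs
      · exact (_root_.measurable_sinc.comp (measurable_const.add
          (Finset.measurable_sum _ fun j _ => measurable_pi_apply j))).abs
    have hmp := (volume_preserving_piFinSuccAbove (fun _ : Fin (k+1) => ℝ) 0).symm
      (MeasurableEquiv.piFinSuccAbove (fun _ : Fin (k+1) => ℝ) 0)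
    calc ∫⁻ x : Fin (k+1) → ℝ,
            ENNReal.ofReal ((∏ j, |_root_.sinc (x j)|) * |_root_.sinc (s + ∑ j, x j)|)
        = ∫⁻ z : ℝ × (Fin k → ℝ), ENNReal.ofReal
            (|_root_.sinc z.1| * ((∏ j, |_root_.sinc (z.2 j)|) * |_root_.sinc ((s + z.1) + ∑ j, z.2 j)|)) := by
          rw [← hmp.lintegral_comp hmeasF]
          apply lintegral_congr
          rintro ⟨a, y⟩
          simp only [MeasurableEquiv.piFinSuccAbove_symm_apply, Fin.insertNthEquiv_apply,
            Fin.insertNth_zero', Fin.prod_univ_succ, Fin.cons_zero, Fin.cons_succ, Fin.sum_cons]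
          congr 1
          rw [show s + (a + ∑ j, y j) = (s + a) + ∑ j, y j by ring]
          ring
      _ = ∫⁻ a : ℝ, ∫⁻ y : Fin k → ℝ, ENNReal.ofReal
            (|_root_.sinc a| * ((∏ j, |_root_.sinc (y j)|) * |_root_.sinc ((s + a) + ∑ j, y j)|)) := by
          have hmeasG : Measurable fun z : ℝ × (Fin k → ℝ) => ENNReal.ofReal
              (|_root_.sinc z.1| * ((∏ j, |_root_.sinc (z.2 j)|) * |_root_.sinc ((s + z.1) + ∑ j, z.2 j)|)) := by
            apply Measurable.ennreal_ofReal
            apply Measurable.mul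
            · exact (_root_.measurable_sinc.comp measurable_fst).abs
            · apply Measurable.mul
              · exact Finset.measurable_prod _ fun j _ =>
                  (_root_.measurable_sinc.comp ((measurable_pi_apply j).comp measurable_snd)).abs
              · exact (_root_.measurable_sinc.comp ((measurable_const.add measurable_fst).add
                  (Finset.measurable_sum _ fun j _ =>
                    (measurable_pi_apply j).comp measurable_snd))).abs
          exact lintegral_prod _ hmeasG.aemeasurable
      _ ≤ ∫⁻ a : ℝ, ENNReal.ofReal (2 * (1 + |a|) ^ (-(1:ℝ))) *
            (ENNReal.ofReal Dk * ENNReal.ofReal ((1 + |s + a|) ^ (-b))) := by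
          apply lintegral_mono
          intro a
          calc ∫⁻ y : Fin k → ℝ, ENNReal.ofReal
                (|_root_.sinc a| * ((∏ j, |_root_.sinc (y j)|) * |_root_.sinc ((s + a) + ∑ j, y j)|))
              = ENNReal.ofReal (|_root_.sinc a|) * ∫⁻ y : Fin k → ℝ, ENNReal.ofReal
                  ((∏ j, |_root_.sinc (y j)|) * |_root_.sinc ((s + a) + ∑ j, y j)|) := by
                rw [← lintegral_const_mul' _ _ ENNReal.ofReal_ne_top]
                congr 1 with y
                rw [← ENNReal.ofReal_mul (abs_nonneg _)]
            _ ≤ ENNReal.ofReal (2 * (1 + |a|) ^ (-(1:ℝ))) *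
                  (ENNReal.ofReal Dk * ENNReal.ofReal ((1 + |s + a|) ^ (-b))) := by
                exact mul_le_mul' (ENNReal.ofReal_le_ofReal (abs_sinc_le a)) (hbd (s + a))
      _ = (ENNReal.ofReal 2 * ENNReal.ofReal Dk) *
            ∫⁻ a : ℝ, ENNReal.ofReal ((1 + |a|) ^ (-(1:ℝ)) * (1 + |s + a|) ^ (-b)) := by
          rw [← lintegral_const_mul' _ _ (by finiteness)]
          congr 1 with a
          rw [ENNReal.ofReal_mul (by norm_num : (0:ℝ) ≤ 2),
            ENNReal.ofReal_mul (by positivity : (0:ℝ) ≤ (1 + |a|) ^ (-(1:ℝ)))]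
          ring
      _ ≤ (ENNReal.ofReal 2 * ENNReal.ofReal Dk) *
            (ENNReal.ofReal C * ENNReal.ofReal ((1 + |s|) ^ (-(b/4)))) := by
          exact mul_le_mul_right (hker s) _
      _ = ENNReal.ofReal (2 * Dk * C) * ENNReal.ofReal ((1 + |s|) ^ (-(b/4))) := by
          rw [ENNReal.ofReal_mul (by positivity), ENNReal.ofReal_mul (by norm_num : (0:ℝ) ≤ 2)]
          ring

/-- For every `p ≥ 1` there is a finite constant `C_p` such that
`∫_{ℝ^p} |sinc(x₁ + ⋯ + x_p)| ∏_j |sinc(x_j)| dx ≤ C_p`. -/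
theorem integral_abs_sinc_sum_mul_prod_le :
    ∀ p : ℕ, 1 ≤ p → ∃ Cp : ℝ,
      ∫⁻ x : Fin p → ℝ,
          ENNReal.ofReal (|_root_.sinc (∑ j, x j)| * ∏ j, |_root_.sinc (x j)|) ≤
        ENNReal.ofReal Cp := by
  intro p _
  obtain ⟨Dp, hDp, h⟩ := main_bound p
  refine ⟨Dp, ?_⟩
  have h0 := h 0
  simp only [abs_zero, add_zero, zero_add] at h0
  rw [Real.one_rpow] at h0
  calc ∫⁻ x : Fin p → ℝ, ENNReal.ofReal (|_root_.sinc (∑ j, x j)| * ∏ j, |_root_.sinc (x j)|)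
      = ∫⁻ x : Fin p → ℝ, ENNReal.ofReal ((∏ j, |_root_.sinc (x j)|) * |_root_.sinc (∑ j, x j)|) := by
        apply lintegral_congr; intro x; rw [mul_comm]
    _ ≤ ENNReal.ofReal Dp * ENNReal.ofReal 1 := h0
    _ = ENNReal.ofReal Dp := by rw [ENNReal.ofReal_one, mul_one]

end
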